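/- Let Σ be an alphabet of cardinality k ≥ 2, let N ≥ 1 be an integer, and let L be a nonempty subset of Σ^N. Set m = |L|, r = ⌊log_k m⌋, and v = 1 + k + k^2 + ⋯ + k^r. If N > 3r + 1, then sc(L) = 2v + m·(N − 2r − 1) + 1 holds if and only if both of the following hold: (a) σ_r(L) = π_r(L) = k^r, and (b) σ_{r+1}(L) = π_{r+1}(L) = m. -/

import Mathlib

/-- The state complexity of a language `L`: the number of distinct left
quotients `p⁻¹L = { s | p ++ s ∈ L }` as `p` ranges over all words (counting
the empty quotient if it occurs). -/
noncomputable def sc {α : Type*} (L : Set (List α)) : ℕ :=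
  Set.ncard { Q : Set (List α) | ∃ p : List α, Q = { s | p ++ s ∈ L } }

/-- `prefixCount L i` is the number of distinct words of length `i` occurring
as prefixes of words of `L` (all words of `L` having length at least `i`). -/
def prefixCount {α : Type*} [DecidableEq α] (L : Finset (List α)) (i : ℕ) : ℕ :=
  (L.image (fun w => w.take i)).card

/-- `suffixCount L i` is the number of distinct words of length `i` occurring
as suffixes of words of `L` (all words of `L` having length at least `i`). -/
def suffixCount {α : Type*} [DecidableEq α] (L : Finset (List α)) (i : ℕ) : ℕ :=
  (L.image (fun w => w.drop (w.length - i))).card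

namespace SC8aux

open Finset

variable {α : Type*} [DecidableEq α]

/-- The (finset) left quotient of `L` by the word `p`. -/
def Qf (L : Finset (List α)) (p : List α) : Finset (List α) :=
  (L.filter fun w => p <+: w).image fun w => w.drop p.length

lemma mem_Qf {L : Finset (List α)} {p s : List α} : s ∈ Qf L p ↔ p ++ s ∈ L := by
  simp only [Qf, Finset.mem_image, Finset.mem_filter]
  constructor
  · rintro ⟨w, ⟨hw, hpre⟩, rfl⟩
    obtain ⟨t, rfl⟩ := hpre
    simpa [List.drop_left] using hw
  · intro h
    exact ⟨p ++ s, ⟨h, ⟨s, rfl⟩⟩, List.drop_left⟩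

/-- Set of length-`i` prefixes of words of `L`. -/
abbrev Pref (L : Finset (List α)) (i : ℕ) : Finset (List α) := L.image fun w => w.take i

/-- Image of `L` under dropping the first `i` letters. -/
abbrev Dim (L : Finset (List α)) (i : ℕ) : Finset (List α) := L.image fun w => w.drop i

/-- The distinct nonempty quotients "at level `i`". -/
abbrev QF (L : Finset (List α)) (i : ℕ) : Finset (Finset (List α)) := (Pref L i).image (Qf L)

section

variable {N : ℕ} {L : Finset (List α)} {i : ℕ} {p s : List α}

lemma length_mem_Pref (hlen : ∀ w ∈ L, w.length = N) (hi : i ≤ N)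
    (hp : p ∈ Pref L i) : p.length = i := by
  obtain ⟨w, hw, rfl⟩ := Finset.mem_image.mp hp
  simp [List.length_take, hlen w hw]
  omega

lemma Qf_nonempty (hp : p ∈ Pref L i) : (Qf L p).Nonempty := by
  obtain ⟨w, hw, rfl⟩ := Finset.mem_image.mp hp
  exact ⟨w.drop i, mem_Qf.2 (by rw [List.take_append_drop]; exact hw)⟩

lemma length_mem_Qf (hlen : ∀ w ∈ L, w.length = N) (hi : i ≤ N)
    (hp : p ∈ Pref L i) (hs : s ∈ Qf L p) : s.length = N - i := by
  have h := mem_Qf.1 hs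
  have := hlen _ h
  rw [List.length_append, length_mem_Pref hlen hi hp] at this
  omega

lemma mem_Dim_of_mem_Qf (hlen : ∀ w ∈ L, w.length = N) (hi : i ≤ N)
    (hp : p ∈ Pref L i) (hs : s ∈ Qf L p) : s ∈ Dim L i := by
  have h := mem_Qf.1 hs
  exact Finset.mem_image.2 ⟨p ++ s, h, List.drop_left' (length_mem_Pref hlen hi hp)⟩

lemma length_mem_Dim (hlen : ∀ w ∈ L, w.length = N) (hs : s ∈ Dim L i) :
    s.length = N - i := by
  obtain ⟨w, hw, rfl⟩ := Finset.mem_image.mp hs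
  simp [hlen w hw]

lemma Pref_N (hlen : ∀ w ∈ L, w.length = N) : Pref L N = L := by
  have : Pref L N = L.image id := by
    apply Finset.image_congr
    intro w hw
    simp only [id]
    rw [← hlen w hw]
    exact List.take_length
  rw [this, Finset.image_id]

lemma Pref_Pref {i' : ℕ} (h : i ≤ i') :
    (Pref L i').image (fun w => w.take i) = Pref L i := by
  rw [Finset.image_image]
  congr 1
  funext w
  simp only [Function.comp]
  rw [List.take_take, min_eq_left h]

lemma Pref_card_mono {i' : ℕ} (h : i ≤ i') : (Pref L i).card ≤ (Pref L i').card := by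
  rw [← Pref_Pref h]
  exact Finset.card_image_le

lemma Dim_Dim {c : ℕ} : (Dim L i).image (fun s => s.drop c) = Dim L (i + c) := by
  rw [Finset.image_image]
  congr 1
  funext w
  simp only [Function.comp]
  rw [List.drop_drop]

lemma Dim_card_anti {i' : ℕ} (h : i ≤ i') : (Dim L i').card ≤ (Dim L i).card := by
  have : Dim L i' = (Dim L i).image (fun s => s.drop (i' - i)) := by
    rw [Dim_Dim]
    congr 1
    omega
  rw [this]
  exact Finset.card_image_le

lemma Pref_card_le : (Pref L i).card ≤ L.card := Finset.card_image_le

lemma Dim_card_le : (Dim L i).card ≤ L.card := Finset.card_image_le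

lemma card_QF_le_Pref : (QF L i).card ≤ (Pref L i).card := Finset.card_image_le

/-- A finset of lists of a fixed length `i` has at most `k^i` elements. -/
lemma card_len_le_pow {k : ℕ} [Fintype α] (hcard : Fintype.card α = k) (a0 : α)
    (s : Finset (List α)) (i : ℕ) (h : ∀ w ∈ s, w.length = i) : s.card ≤ k ^ i := by
  classical
  have hinj : Set.InjOn (fun (w : List α) (j : Fin i) => w.getD j a0) ↑s := ?_
  · have := Finset.card_le_card_of_injOn (s := s)
      (t := (Finset.univ : Finset (Fin i → α)))
      (fun (w : List α) (j : Fin i) => w.getD j a0) (fun w _ => Finset.mem_univ _) hinj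
    rwa [Finset.card_univ, Fintype.card_fun, Fintype.card_fin, hcard] at this
  · intro w hw w' hw' hf
    simp only [Finset.mem_coe] at hw hw'
    apply List.ext_getElem (by rw [h w hw, h w' hw'])
    intro n h1 h2
    have hn : n < i := by rw [h w hw] at h1; exact h1
    have := congrFun hf ⟨n, hn⟩
    simpa [List.getD_eq_getElem?_getD, List.getElem?_eq_getElem, h1, h2] using this

lemma card_le_take_mul_drop (s : Finset (List α)) (c : ℕ) :
    s.card ≤ (s.image fun w => w.take c).card * (s.image fun w => w.drop c).card := by
  classical
  have hinj : Set.InjOn (fun w : List α => (w.take c, w.drop c)) ↑s := ?_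
  · have := Finset.card_le_card_of_injOn (s := s)
      (t := (s.image fun w => w.take c) ×ˢ (s.image fun w => w.drop c))
      (fun w : List α => (w.take c, w.drop c))
      (fun w hw => Finset.mem_product.2 ⟨Finset.mem_image_of_mem _ hw, Finset.mem_image_of_mem _ hw⟩)
      hinj
    rwa [Finset.card_product] at this
  · intro w hw w' hw' h
    have h1 : w.take c = w'.take c := congrArg Prod.fst h
    have h2 : w.drop c = w'.drop c := congrArg Prod.snd h
    rw [← List.take_append_drop c w, ← List.take_append_drop c w', h1, h2]

lemma sum_Qf_card (hlen : ∀ w ∈ L, w.length = N) (hi : i ≤ N) :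
    ∑ p ∈ Pref L i, (Qf L p).card = L.card := by
  rw [Finset.card_eq_sum_card_fiberwise
    (f := fun w => w.take i) (t := Pref L i) (fun w hw => Finset.mem_image_of_mem _ hw)]
  refine Finset.sum_congr rfl fun p hp => ?_
  have hpl : p.length = i := length_mem_Pref hlen hi hp
  have hQ : Qf L p = (L.filter fun w => w.take i = p).image fun w => w.drop i := by
    rw [Qf, hpl]
    congr 1
    apply Finset.filter_congr
    intro w _
    rw [List.prefix_iff_eq_take, hpl]
    exact ⟨fun h => h.symm, fun h => h.symm⟩
  rw [hQ]
  apply Finset.card_image_of_injOn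
  intro w hw w' hw' h
  simp only [Finset.coe_filter, Set.mem_setOf_eq] at hw hw'
  have h' : w.drop i = w'.drop i := h
  rw [← List.take_append_drop i w, ← List.take_append_drop i w', hw.2, hw'.2, h']

lemma singletons_of_card_Pref (hlen : ∀ w ∈ L, w.length = N) (hi : i ≤ N)
    (h : (Pref L i).card = L.card) : ∀ p ∈ Pref L i, (Qf L p).card = 1 := by
  by_contra hcon
  push_neg at hcon
  obtain ⟨p₀, hp₀, hne1⟩ := hcon
  have hlt : (Pref L i).card < ∑ p ∈ Pref L i, (Qf L p).card := by
    rw [Finset.card_eq_sum_ones (Pref L i)]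
    refine Finset.sum_lt_sum (fun p hp => (Qf_nonempty hp).card_pos) ⟨p₀, hp₀, ?_⟩
    have := (Qf_nonempty hp₀).card_pos
    omega
  rw [sum_Qf_card hlen hi] at hlt
  omega

lemma QF_eq_singleton_image (hlen : ∀ w ∈ L, w.length = N) (hi : i ≤ N)
    (h1 : ∀ p ∈ Pref L i, (Qf L p).card = 1) :
    QF L i = (Dim L i).image fun s => ({s} : Finset (List α)) := by
  ext S
  constructor
  · intro hS
    obtain ⟨p, hp, rfl⟩ := Finset.mem_image.mp hS
    obtain ⟨s, hs⟩ := Finset.card_eq_one.mp (h1 p hp)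
    have hsQ : s ∈ Qf L p := hs ▸ Finset.mem_singleton_self s
    exact Finset.mem_image.2 ⟨s, mem_Dim_of_mem_Qf hlen hi hp hsQ, hs.symm⟩
  · intro hS
    obtain ⟨s, hsDim, rfl⟩ := Finset.mem_image.mp hS
    obtain ⟨w, hw, rfl⟩ := Finset.mem_image.mp hsDim
    have hp : w.take i ∈ Pref L i := Finset.mem_image_of_mem _ hw
    have hmem : w.drop i ∈ Qf L (w.take i) :=
      mem_Qf.2 (by rw [List.take_append_drop]; exact hw)
    obtain ⟨s', hs'⟩ := Finset.card_eq_one.mp (h1 _ hp)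
    have heq : w.drop i = s' := by
      rw [hs'] at hmem
      exact Finset.mem_singleton.mp hmem
    exact Finset.mem_image.2 ⟨w.take i, hp, by rw [hs', heq]⟩

lemma card_QF_of_singletons (hlen : ∀ w ∈ L, w.length = N) (hi : i ≤ N)
    (h1 : ∀ p ∈ Pref L i, (Qf L p).card = 1) :
    (QF L i).card = (Dim L i).card := by
  rw [QF_eq_singleton_image hlen hi h1]
  exact Finset.card_image_of_injective _ Finset.singleton_injective

lemma card_QF_eq_Pref_of_drop_inj (hlen : ∀ w ∈ L, w.length = N) (hi : i ≤ N)
    (h : (Dim L i).card = L.card) : (QF L i).card = (Pref L i).card := by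
  apply Finset.card_image_of_injOn
  have hinj : Set.InjOn (fun w : List α => w.drop i) ↑L :=
    Finset.injOn_of_card_image_eq (by exact h)
  intro a ha b hb hQ
  simp only [Finset.mem_coe] at ha hb
  obtain ⟨s, hs⟩ := Qf_nonempty ha
  have hs' : s ∈ Qf L b := hQ ▸ hs
  have h1 : a ++ s ∈ L := mem_Qf.1 hs
  have h2 : b ++ s ∈ L := mem_Qf.1 hs'
  have e : (fun w : List α => w.drop i) (a ++ s) = (fun w : List α => w.drop i) (b ++ s) := by
    simp only
    rw [List.drop_left' (length_mem_Pref hlen hi ha), List.drop_left' (length_mem_Pref hlen hi hb)]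
  have := hinj (Finset.mem_coe.2 h1) (Finset.mem_coe.2 h2) e
  have := congrArg (fun l => List.take i l) this
  simpa [List.take_left' (length_mem_Pref hlen hi ha),
    List.take_left' (length_mem_Pref hlen hi hb)] using this

lemma card_QF_le (hlen : ∀ w ∈ L, w.length = N) (hi : i ≤ N) :
    (QF L i).card ≤ (Dim L i).card + (L.card - (Pref L i).card) := by
  classical
  have hpart := Finset.card_filter_add_card_filter_not
    (s := QF L i) (p := fun S => S.card = 1)
  have h1 : ((QF L i).filter fun S => S.card = 1).card ≤ (Dim L i).card := by
    have hsub : ((QF L i).filter fun S => S.card = 1) ⊆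
        (Dim L i).image fun s => ({s} : Finset (List α)) := by
      intro S hS
      obtain ⟨hSQ, hS1⟩ := Finset.mem_filter.mp hS
      obtain ⟨p, hp, rfl⟩ := Finset.mem_image.mp hSQ
      obtain ⟨s, hs⟩ := Finset.card_eq_one.mp hS1
      have hsQ : s ∈ Qf L p := hs ▸ Finset.mem_singleton_self s
      exact Finset.mem_image.2 ⟨s, mem_Dim_of_mem_Qf hlen hi hp hsQ, hs.symm⟩
    exact (Finset.card_le_card hsub).trans Finset.card_image_le
  have h2 : ((QF L i).filter fun S => ¬ S.card = 1).card ≤ L.card - (Pref L i).card := by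
    rw [Finset.filter_image]
    refine le_trans Finset.card_image_le ?_
    set P := Pref L i with hP
    set Pbig := P.filter (fun p => ¬ (Qf L p).card = 1) with hPbig
    have key : ∀ p ∈ Pbig, 2 ≤ (Qf L p).card := by
      intro p hp
      have hp' : p ∈ P := Finset.filter_subset _ _ hp
      have := (Qf_nonempty hp').card_pos
      have := (Finset.mem_filter.mp hp).2
      omega
    have hle : Pbig.card ≤ ∑ p ∈ Pbig, ((Qf L p).card - 1) := by
      rw [Finset.card_eq_sum_ones Pbig]
      exact Finset.sum_le_sum fun p hp => by have := key p hp; omega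
    have hsplit : ∑ p ∈ Pbig, ((Qf L p).card - 1) ≤ ∑ p ∈ P, ((Qf L p).card - 1) :=
      Finset.sum_le_sum_of_subset (Finset.filter_subset _ _)
    have hfin : ∑ p ∈ P, ((Qf L p).card - 1) + P.card = L.card := by
      rw [← sum_Qf_card hlen hi (L := L), Finset.card_eq_sum_ones P, ← Finset.sum_add_distrib]
      exact Finset.sum_congr rfl fun p hp => by
        have := (Qf_nonempty hp).card_pos; omega
    omega
  omega

lemma sc_eq_sum (hlen : ∀ w ∈ L, w.length = N) (hne : L.Nonempty) (a0 : α) :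
    sc (↑L : Set (List α)) = 1 + ∑ i ∈ Finset.range (N + 1), (QF L i).card := by
  classical
  set F : Finset (Finset (List α)) :=
    insert ∅ ((Finset.range (N + 1)).biUnion fun i => QF L i) with hF
  have hQS : ∀ p : List α, { s | p ++ s ∈ (↑L : Set (List α)) } = ↑(Qf L p) := by
    intro p; ext s
    simp [mem_Qf]
  have hset : { Q : Set (List α) | ∃ p : List α, Q = { s | p ++ s ∈ (↑L : Set (List α)) } }
      = (fun S : Finset (List α) => (↑S : Set (List α))) '' ↑F := by
    ext Q
    simp only [Set.mem_setOf_eq, Set.mem_image, Finset.mem_coe]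
    constructor
    · rintro ⟨p, rfl⟩
      by_cases hp : ∃ w ∈ L, p <+: w
      · obtain ⟨w, hw, hpre⟩ := hp
        refine ⟨Qf L p, ?_, (hQS p).symm⟩
        have hplen : p.length ≤ N := by
          have := hpre.length_le
          rw [hlen w hw] at this
          exact this
        have hp' : p ∈ Pref L p.length :=
          Finset.mem_image.2 ⟨w, hw, (List.prefix_iff_eq_take.mp hpre).symm⟩
        exact Finset.mem_insert.2 (Or.inr (Finset.mem_biUnion.2
          ⟨p.length, Finset.mem_range.2 (by omega), Finset.mem_image.2 ⟨p, hp', rfl⟩⟩))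
      · refine ⟨∅, Finset.mem_insert_self _ _, ?_⟩
        ext s
        simp only [Finset.coe_empty, Set.mem_empty_iff_false, Set.mem_setOf_eq,
          Finset.mem_coe, false_iff]
        exact fun h => hp ⟨p ++ s, h, List.prefix_append p s⟩
    · rintro ⟨S, hS, rfl⟩
      rcases Finset.mem_insert.mp hS with rfl | hS'
      · obtain ⟨w0, hw0⟩ := hne
        refine ⟨w0 ++ [a0], ?_⟩
        ext s
        simp only [Finset.coe_empty, Set.mem_empty_iff_false, Set.mem_setOf_eq,
          Finset.mem_coe, false_iff]
        intro hs
        have h1 := hlen _ hs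
        simp only [List.length_append, List.length_singleton] at h1
        have h2 := hlen w0 hw0
        omega
      · obtain ⟨i, _, hSi⟩ := Finset.mem_biUnion.mp hS'
        obtain ⟨p, _, rfl⟩ := Finset.mem_image.mp hSi
        exact ⟨p, (hQS p).symm⟩
  rw [sc, hset, Set.ncard_image_of_injective _ Finset.coe_injective, Set.ncard_coe_finset]
  have hnm : ∅ ∉ (Finset.range (N + 1)).biUnion fun i => QF L i := by
    intro h
    obtain ⟨i, _, hQ⟩ := Finset.mem_biUnion.mp h
    obtain ⟨p, hp, hQp⟩ := Finset.mem_image.mp hQ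
    exact (Qf_nonempty hp).ne_empty hQp
  have hdisj : ∀ x ∈ Finset.range (N + 1), ∀ y ∈ Finset.range (N + 1), x ≠ y →
      Disjoint (QF L x) (QF L y) := by
    intro x hx y hy hxy
    rw [Finset.disjoint_left]
    intro S hSx hSy
    obtain ⟨p, hp, rfl⟩ := Finset.mem_image.mp hSx
    obtain ⟨p', hp', heq⟩ := Finset.mem_image.mp hSy
    obtain ⟨s, hs⟩ := Qf_nonempty hp
    have hx' : x ≤ N := by simp only [Finset.mem_range] at hx; omega
    have hy' : y ≤ N := by simp only [Finset.mem_range] at hy; omega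
    have l1 : s.length = N - x := length_mem_Qf hlen hx' hp hs
    have l2 : s.length = N - y := length_mem_Qf hlen hy' hp' (heq ▸ hs)
    omega
  rw [hF, Finset.card_insert_of_notMem hnm, Finset.card_biUnion hdisj]
  omega

end

/-- Arithmetic: the sum of the level bounds. -/
lemma sum_B {k N r m v : ℕ} (hv : v = ∑ i ∈ Finset.range (r + 1), k ^ i)
    (hNr : 3 * r + 1 < N) :
    ∑ i ∈ Finset.range (N + 1),
        (if i ≤ r then k ^ i else if i ≤ N - r - 1 then m else k ^ (N - i))
      = 2 * v + m * (N - 2 * r - 1) := by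
  have h1 : (0:ℕ) ≤ r + 1 := by omega
  have h2 : r + 1 ≤ N - r := by omega
  have h3 : N - r ≤ N + 1 := by omega
  rw [Finset.range_eq_Ico, ← Finset.sum_Ico_consecutive _ (by omega : (0:ℕ) ≤ N - r) h3,
    ← Finset.sum_Ico_consecutive _ h1 h2]
  have S1 : ∑ i ∈ Finset.Ico 0 (r + 1),
      (if i ≤ r then k ^ i else if i ≤ N - r - 1 then m else k ^ (N - i)) = v := by
    rw [hv, Finset.range_eq_Ico]
    refine Finset.sum_congr rfl fun i hi => ?_
    simp only [Finset.mem_Ico] at hi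
    rw [if_pos (by omega)]
  have S2 : ∑ i ∈ Finset.Ico (r + 1) (N - r),
      (if i ≤ r then k ^ i else if i ≤ N - r - 1 then m else k ^ (N - i))
      = m * (N - 2 * r - 1) := by
    have : ∀ i ∈ Finset.Ico (r + 1) (N - r),
        (if i ≤ r then k ^ i else if i ≤ N - r - 1 then m else k ^ (N - i)) = m := by
      intro i hi
      simp only [Finset.mem_Ico] at hi
      rw [if_neg (by omega), if_pos (by omega)]
    rw [Finset.sum_congr rfl this, Finset.sum_const, Nat.card_Ico, smul_eq_mul]
    have : N - r - (r + 1) = N - 2 * r - 1 := by omega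
    rw [this, Nat.mul_comm]
  have S3 : ∑ i ∈ Finset.Ico (N - r) (N + 1),
      (if i ≤ r then k ^ i else if i ≤ N - r - 1 then m else k ^ (N - i)) = v := by
    have hc : ∀ i ∈ Finset.Ico (N - r) (N + 1),
        (if i ≤ r then k ^ i else if i ≤ N - r - 1 then m else k ^ (N - i)) = k ^ (N - i) := by
      intro i hi
      simp only [Finset.mem_Ico] at hi
      rw [if_neg (by omega), if_neg (by omega)]
    rw [Finset.sum_congr rfl hc, Finset.sum_Ico_eq_sum_range]
    have hcard : N + 1 - (N - r) = r + 1 := by omega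
    rw [hcard, hv]
    rw [← Finset.sum_range_reflect]
    refine Finset.sum_congr rfl fun j hj => ?_
    simp only [Finset.mem_range] at hj
    congr 1
    omega
  rw [S1, S2, S3]
  ring

end SC8aux

theorem stmt_8 {α : Type*} [Fintype α] [DecidableEq α]
    (k N : ℕ) (hk : 2 ≤ k) (hcard : Fintype.card α = k) (hN : 1 ≤ N)
    (L : Finset (List α)) (hne : L.Nonempty) (hlen : ∀ w ∈ L, w.length = N)
    (m r v : ℕ) (hm : m = L.card) (hr : r = Nat.log k m)
    (hv : v = ∑ i ∈ Finset.range (r + 1), k ^ i)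
    (hNr : 3 * r + 1 < N) :
    sc (↑L : Set (List α)) = 2 * v + m * (N - 2 * r - 1) + 1 ↔
      (suffixCount L r = k ^ r ∧ prefixCount L r = k ^ r) ∧
      (suffixCount L (r + 1) = m ∧ prefixCount L (r + 1) = m) := by
  classical
  have hk0 : 0 < k := by omega
  have hNonempty : Nonempty α := by
    rw [← Fintype.card_pos_iff, hcard]; omega
  obtain ⟨a0⟩ := hNonempty
  subst hm
  have hsc := SC8aux.sc_eq_sum hlen hne a0
  have hπpow : ∀ i, i ≤ N → (SC8aux.Pref L i).card ≤ k ^ i := fun i hi =>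
    SC8aux.card_len_le_pow hcard a0 _ i (fun p hp => SC8aux.length_mem_Pref hlen hi hp)
  have hσpow : ∀ i, i ≤ N → (SC8aux.Dim L i).card ≤ k ^ (N - i) := fun i _ =>
    SC8aux.card_len_le_pow hcard a0 _ (N - i) (fun s hs => SC8aux.length_mem_Dim hlen hs)
  have hπN : (SC8aux.Pref L N).card = L.card := by rw [SC8aux.Pref_N hlen]
  have hsuffixCount : ∀ j, suffixCount L j = (SC8aux.Dim L (N - j)).card := by
    intro j
    rw [suffixCount]
    congr 1
    apply Finset.image_congr
    intro w hw
    simp only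
    rw [hlen w (Finset.mem_coe.mp hw)]
  constructor
  · -- forward direction
    intro hval
    have hsum : ∑ i ∈ Finset.range (N + 1), (SC8aux.QF L i).card
        = 2 * v + L.card * (N - 2 * r - 1) := by
      rw [hsc] at hval
      generalize L.card * (N - 2 * r - 1) = M at hval ⊢
      omega
    set t := L.card - (SC8aux.Pref L (N - r - 1)).card with ht
    have hπt : (SC8aux.Pref L (N - r - 1)).card + t = L.card := by
      have := SC8aux.Pref_card_le (L := L) (i := N - r - 1); omega
    -- block inequalities
    have hlow : ∑ i ∈ Finset.Ico 0 (r + 1), (SC8aux.QF L i).card ≤ v := by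
      calc ∑ i ∈ Finset.Ico 0 (r + 1), (SC8aux.QF L i).card
          ≤ ∑ i ∈ Finset.Ico 0 (r + 1), k ^ i := by
            refine Finset.sum_le_sum fun i hi => ?_
            simp only [Finset.mem_Ico] at hi
            exact le_trans SC8aux.card_QF_le_Pref (hπpow i (by omega))
        _ = v := by rw [hv, Finset.range_eq_Ico]
    have hmid : (∑ i ∈ Finset.Ico (r + 1) (N - r), (SC8aux.QF L i).card) + (N - 2 * r - 1) * t
        ≤ (N - 2 * r - 1) * L.card := by
      have hpt : ∀ i ∈ Finset.Ico (r + 1) (N - r), (SC8aux.QF L i).card + t ≤ L.card := by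
        intro i hi
        simp only [Finset.mem_Ico] at hi
        have h1 : (SC8aux.QF L i).card ≤ (SC8aux.Pref L i).card := SC8aux.card_QF_le_Pref
        have h2 : (SC8aux.Pref L i).card ≤ (SC8aux.Pref L (N - r - 1)).card :=
          SC8aux.Pref_card_mono (by omega)
        omega
      have hdistr : ∑ i ∈ Finset.Ico (r + 1) (N - r), ((SC8aux.QF L i).card + t)
          = (∑ i ∈ Finset.Ico (r + 1) (N - r), (SC8aux.QF L i).card) + (N - 2 * r - 1) * t := by
        rw [Finset.sum_add_distrib, Finset.sum_const, Nat.card_Ico, smul_eq_mul]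
        have h3 : N - r - (r + 1) = N - 2 * r - 1 := by omega
        rw [h3]
      have hconst : ∑ _i ∈ Finset.Ico (r + 1) (N - r), L.card = (N - 2 * r - 1) * L.card := by
        rw [Finset.sum_const, Nat.card_Ico, smul_eq_mul]
        have h3 : N - r - (r + 1) = N - 2 * r - 1 := by omega
        rw [h3]
      calc (∑ i ∈ Finset.Ico (r + 1) (N - r), (SC8aux.QF L i).card) + (N - 2 * r - 1) * t
          = ∑ i ∈ Finset.Ico (r + 1) (N - r), ((SC8aux.QF L i).card + t) := hdistr.symm
        _ ≤ ∑ _i ∈ Finset.Ico (r + 1) (N - r), L.card := Finset.sum_le_sum hpt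
        _ = (N - 2 * r - 1) * L.card := hconst
    have htop : ∑ i ∈ Finset.Ico (N - r) (N + 1), (SC8aux.QF L i).card ≤ v + r * t := by
      have hterm : ∀ i ∈ Finset.Ico (N - r) (N + 1), (SC8aux.QF L i).card
          ≤ k ^ (N - i) + (L.card - (SC8aux.Pref L i).card) := by
        intro i hi
        simp only [Finset.mem_Ico] at hi
        exact le_trans (SC8aux.card_QF_le hlen (by omega))
          (Nat.add_le_add_right (hσpow i (by omega)) _)
      have e1 : ∑ i ∈ Finset.Ico (N - r) (N + 1), k ^ (N - i) = v := by
        rw [Finset.sum_Ico_eq_sum_range]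
        have hcn : N + 1 - (N - r) = r + 1 := by omega
        rw [hcn, hv, ← Finset.sum_range_reflect]
        refine Finset.sum_congr rfl fun j hj => ?_
        simp only [Finset.mem_range] at hj
        congr 1
        omega
      have e2 : ∑ i ∈ Finset.Ico (N - r) (N + 1), (L.card - (SC8aux.Pref L i).card)
          ≤ r * t := by
        rw [Finset.sum_Ico_succ_top (by omega : N - r ≤ N)]
        simp only [hπN, Nat.sub_self, Nat.add_zero]
        calc ∑ i ∈ Finset.Ico (N - r) N, (L.card - (SC8aux.Pref L i).card)
            ≤ ∑ _i ∈ Finset.Ico (N - r) N, t := by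
              refine Finset.sum_le_sum fun i hi => ?_
              simp only [Finset.mem_Ico] at hi
              have h1 := SC8aux.Pref_card_mono (L := L) (show N - r - 1 ≤ i by omega)
              omega
          _ = r * t := by
              rw [Finset.sum_const, Nat.card_Ico, smul_eq_mul]
              have h3 : N - (N - r) = r := by omega
              rw [h3]
      calc ∑ i ∈ Finset.Ico (N - r) (N + 1), (SC8aux.QF L i).card
          ≤ ∑ i ∈ Finset.Ico (N - r) (N + 1),
              (k ^ (N - i) + (L.card - (SC8aux.Pref L i).card)) := Finset.sum_le_sum hterm
        _ = (∑ i ∈ Finset.Ico (N - r) (N + 1), k ^ (N - i))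
            + ∑ i ∈ Finset.Ico (N - r) (N + 1), (L.card - (SC8aux.Pref L i).card) :=
            Finset.sum_add_distrib
        _ ≤ v + r * t := by rw [e1]; exact Nat.add_le_add_left e2 _
    have hsplit1 : (∑ i ∈ Finset.Ico 0 (r + 1), (SC8aux.QF L i).card)
        + ∑ i ∈ Finset.Ico (r + 1) (N - r), (SC8aux.QF L i).card
        = ∑ i ∈ Finset.Ico 0 (N - r), (SC8aux.QF L i).card :=
      Finset.sum_Ico_consecutive _ (by omega) (by omega)
    have hsplit2 : (∑ i ∈ Finset.Ico 0 (N - r), (SC8aux.QF L i).card)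
        + ∑ i ∈ Finset.Ico (N - r) (N + 1), (SC8aux.QF L i).card
        = ∑ i ∈ Finset.Ico 0 (N + 1), (SC8aux.QF L i).card :=
      Finset.sum_Ico_consecutive _ (by omega) (by omega)
    have hrange : ∑ i ∈ Finset.range (N + 1), (SC8aux.QF L i).card
        = ∑ i ∈ Finset.Ico 0 (N + 1), (SC8aux.QF L i).card := by
      rw [Finset.range_eq_Ico]
    have ht0 : t = 0 := by
      by_contra htne
      have htpos : 1 ≤ t := Nat.pos_of_ne_zero htne
      have hmc : L.card * (N - 2 * r - 1) = (N - 2 * r - 1) * L.card := Nat.mul_comm _ _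
      have hsm : (r + 1) * t = r * t + t := Nat.succ_mul r t
      have hcoef : (r + 1) * t ≤ (N - 2 * r - 1) * t :=
        Nat.mul_le_mul_right t (by omega)
      linarith [hsplit1, hsplit2, hrange, hsum, hlow, hmid, htop]
    have hπmax : (SC8aux.Pref L (N - r - 1)).card = L.card := by omega
    have hπhi : ∀ i, N - r - 1 ≤ i → i ≤ N → (SC8aux.Pref L i).card = L.card := by
      intro i h1 h2
      have h3 := SC8aux.Pref_card_mono (L := L) h1
      have h4 := SC8aux.Pref_card_le (L := L) (i := i)
      omega
    have hBq : ∀ i ∈ Finset.range (N + 1), (SC8aux.QF L i).card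
        ≤ (if i ≤ r then k ^ i else if i ≤ N - r - 1 then L.card else k ^ (N - i)) := by
      intro i hi
      simp only [Finset.mem_range] at hi
      by_cases h1 : i ≤ r
      · rw [if_pos h1]
        exact le_trans SC8aux.card_QF_le_Pref (hπpow i (by omega))
      by_cases h2 : i ≤ N - r - 1
      · rw [if_neg h1, if_pos h2]
        exact le_trans SC8aux.card_QF_le_Pref SC8aux.Pref_card_le
      · rw [if_neg h1, if_neg h2]
        have hsing := SC8aux.singletons_of_card_Pref hlen (by omega)
          (hπhi i (by omega) (by omega))
        rw [SC8aux.card_QF_of_singletons hlen (by omega) hsing]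
        exact hσpow i (by omega)
    have hqeq : ∀ i ∈ Finset.range (N + 1), (SC8aux.QF L i).card
        = (if i ≤ r then k ^ i else if i ≤ N - r - 1 then L.card else k ^ (N - i)) :=
      (Finset.sum_eq_sum_iff_of_le hBq).mp (by rw [hsum, SC8aux.sum_B hv hNr])
    have hsingAt : ∀ i, N - r - 1 ≤ i → i ≤ N →
        (SC8aux.QF L i).card = (SC8aux.Dim L i).card := fun i h1 h2 =>
      SC8aux.card_QF_of_singletons hlen h2
        (SC8aux.singletons_of_card_Pref hlen h2 (hπhi i h1 h2))
    have hqr := hqeq r (Finset.mem_range.mpr (by omega))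
    rw [if_pos (le_refl r)] at hqr
    have hπr : (SC8aux.Pref L r).card = k ^ r := by
      refine le_antisymm (hπpow r (by omega)) ?_
      calc k ^ r = (SC8aux.QF L r).card := hqr.symm
        _ ≤ (SC8aux.Pref L r).card := SC8aux.card_QF_le_Pref
    have hqr1 := hqeq (r + 1) (Finset.mem_range.mpr (by omega))
    rw [if_neg (by omega), if_pos (by omega)] at hqr1
    have hπr1 : (SC8aux.Pref L (r + 1)).card = L.card := by
      refine le_antisymm SC8aux.Pref_card_le ?_
      calc L.card = (SC8aux.QF L (r + 1)).card := hqr1.symm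
        _ ≤ (SC8aux.Pref L (r + 1)).card := SC8aux.card_QF_le_Pref
    have hqNr := hqeq (N - r) (Finset.mem_range.mpr (by omega))
    rw [if_neg (by omega), if_neg (by omega)] at hqNr
    have hσr : (SC8aux.Dim L (N - r)).card = k ^ r := by
      rw [← hsingAt (N - r) (by omega) (by omega), hqNr]
      congr 1
      omega
    have hqNr1 := hqeq (N - r - 1) (Finset.mem_range.mpr (by omega))
    rw [if_neg (by omega), if_pos (le_refl _)] at hqNr1
    have hσr1 : (SC8aux.Dim L (N - r - 1)).card = L.card := by
      rw [← hsingAt (N - r - 1) le_rfl (by omega)]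
      exact hqNr1
    refine ⟨⟨?_, hπr⟩, ⟨?_, hπr1⟩⟩
    · rw [hsuffixCount r]
      exact hσr
    · rw [hsuffixCount (r + 1)]
      have h3 : N - (r + 1) = N - r - 1 := by omega
      rw [h3]
      exact hσr1
  · -- backward direction
    rintro ⟨⟨hσr, hπr⟩, ⟨hσr1, hπr1⟩⟩
    rw [hsuffixCount r] at hσr
    rw [hsuffixCount (r + 1)] at hσr1
    have hNr1 : N - (r + 1) = N - r - 1 := by omega
    rw [hNr1] at hσr1
    have hπr' : (SC8aux.Pref L r).card = k ^ r := hπr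
    have hπr1' : (SC8aux.Pref L (r + 1)).card = L.card := hπr1
    have hπlow : ∀ i, i ≤ r → (SC8aux.Pref L i).card = k ^ i := by
      intro i hi
      refine le_antisymm (hπpow i (by omega)) ?_
      have hsp := SC8aux.card_le_take_mul_drop (SC8aux.Pref L r) i
      rw [SC8aux.Pref_Pref hi, hπr'] at hsp
      have hd : ((SC8aux.Pref L r).image fun w => w.drop i).card ≤ k ^ (r - i) := by
        apply SC8aux.card_len_le_pow hcard a0
        intro s hs
        obtain ⟨p, hp, rfl⟩ := Finset.mem_image.mp hs
        have hl := SC8aux.length_mem_Pref hlen (by omega) hp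
        simp [List.length_drop, hl]
      have h1 : k ^ r ≤ (SC8aux.Pref L i).card * k ^ (r - i) :=
        le_trans hsp (Nat.mul_le_mul_left _ hd)
      have h2 : k ^ i * k ^ (r - i) = k ^ r := by
        rw [← pow_add]
        congr 1
        omega
      have hkpos : 0 < k ^ (r - i) := Nat.pow_pos (by omega)
      rw [← h2] at h1
      exact Nat.le_of_mul_le_mul_right h1 hkpos
    have hσhi : ∀ i, N - r ≤ i → i ≤ N → (SC8aux.Dim L i).card = k ^ (N - i) := by
      intro i h1 h2
      refine le_antisymm (hσpow i h2) ?_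
      have hsp := SC8aux.card_le_take_mul_drop (SC8aux.Dim L (N - r)) (i - (N - r))
      have hdd : (SC8aux.Dim L (N - r)).image (fun s => s.drop (i - (N - r)))
          = SC8aux.Dim L i := by
        rw [SC8aux.Dim_Dim]
        congr 1
        omega
      rw [hdd, hσr] at hsp
      have htk : ((SC8aux.Dim L (N - r)).image fun w => w.take (i - (N - r))).card
          ≤ k ^ (i - (N - r)) := by
        apply SC8aux.card_len_le_pow hcard a0
        intro s hs
        obtain ⟨u, hu, rfl⟩ := Finset.mem_image.mp hs
        have hl := SC8aux.length_mem_Dim hlen hu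
        simp only [List.length_take, hl]
        omega
      have h1' : k ^ r ≤ k ^ (i - (N - r)) * (SC8aux.Dim L i).card :=
        le_trans hsp (Nat.mul_le_mul_right _ htk)
      have h2' : k ^ (i - (N - r)) * k ^ (N - i) = k ^ r := by
        rw [← pow_add]
        congr 1
        omega
      have hkpos : 0 < k ^ (i - (N - r)) := Nat.pow_pos (by omega)
      rw [← h2'] at h1'
      exact Nat.le_of_mul_le_mul_left h1' hkpos
    have hπhi : ∀ i, r + 1 ≤ i → i ≤ N → (SC8aux.Pref L i).card = L.card := by
      intro i h1 h2
      have h3 := SC8aux.Pref_card_mono (L := L) h1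
      have h4 := SC8aux.Pref_card_le (L := L) (i := i)
      omega
    have hσmid : ∀ i, i ≤ N - r - 1 → (SC8aux.Dim L i).card = L.card := by
      intro i hi
      have h1 := SC8aux.Dim_card_anti (L := L) hi
      have h2 := SC8aux.Dim_card_le (L := L) (i := i)
      omega
    have hqB : ∀ i ∈ Finset.range (N + 1), (SC8aux.QF L i).card
        = (if i ≤ r then k ^ i else if i ≤ N - r - 1 then L.card else k ^ (N - i)) := by
      intro i hi
      simp only [Finset.mem_range] at hi
      by_cases h1 : i ≤ r
      · rw [if_pos h1,
          SC8aux.card_QF_eq_Pref_of_drop_inj hlen (by omega) (hσmid i (by omega)),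
          hπlow i h1]
      by_cases h2 : i ≤ N - r - 1
      · rw [if_neg h1, if_pos h2,
          SC8aux.card_QF_eq_Pref_of_drop_inj hlen (by omega) (hσmid i h2),
          hπhi i (by omega) (by omega)]
      · rw [if_neg h1, if_neg h2,
          SC8aux.card_QF_of_singletons hlen (by omega)
            (SC8aux.singletons_of_card_Pref hlen (by omega) (hπhi i (by omega) (by omega))),
          hσhi i (by omega) (by omega)]
    rw [hsc, Finset.sum_congr rfl hqB, SC8aux.sum_B hv hNr]
    ring
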